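/- Let n be a positive integer, A a nontrivial Boolean algebra, and X ⊆ A \ {0}. Then X is n-independent if and only if for every finite R ⊆ X and every function ε : R → {0,1}, if the elementary product ∏_{x ∈ R} x^{ε(x)} = 0 (where x¹ = x and x⁰ = xᶜ), then there exists R' ⊆ {x ∈ R : ε(x) = 1} with |R'| ≤ n and inf R' = 0. -/

import Mathlib

universe u

/-- `X` is `n`-independent: `⊥ ∉ X`, (⊥1) no nonempty finite `F ⊆ X` has `sup F = ⊤`,
(⊥2ₙ) any nonempty finite `F ⊆ X` with `inf F = ⊥` has a subset of size `≤ n` with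
infimum `⊥`, and (⊥3) if `⊥ ≠ inf F ≤ sup G` then `F ∩ G ≠ ∅`. -/
def NIndependent {α : Type u} [BooleanAlgebra α] (n : ℕ) (X : Set α) : Prop :=
  ⊥ ∉ X ∧
  (∀ F : Finset α, ↑F ⊆ X → F.Nonempty → F.sup id ≠ ⊤) ∧
  (∀ F : Finset α, ↑F ⊆ X → F.Nonempty → F.inf id = ⊥ →
    ∃ F' ⊆ F, F'.card ≤ n ∧ F'.inf id = ⊥) ∧
  (∀ F G : Finset α, ↑F ⊆ X → ↑G ⊆ X → F.Nonempty → G.Nonempty →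
    F.inf id ≠ ⊥ → F.inf id ≤ G.sup id → ((F : Set α) ∩ (G : Set α)).Nonempty)

lemma finset_inf_compl_eq {α : Type u} [BooleanAlgebra α] (s : Finset α) :
    s.inf (fun x => xᶜ) = (s.sup id)ᶜ := by
  classical
  induction s using Finset.induction_on with
  | empty => simp
  | insert _ _ _ ih => simp only [Finset.inf_insert, Finset.sup_insert, compl_sup, ih, id]

/-- For `n` a positive integer, a nontrivial Boolean algebra `A` and `X ⊆ A \ {⊥}`:
`X` is `n`-independent iff every vanishing elementary product over a finite `R ⊆ X`
(where `x¹ = x`, `x⁰ = xᶜ`) admits `R' ⊆ {x ∈ R : ε x = 1}` with `|R'| ≤ n` and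
`inf R' = ⊥`. -/
theorem nIndependent_iff_elementary_products {α : Type u} [BooleanAlgebra α] [Nontrivial α]
    (n : ℕ) (hn : 0 < n) (X : Set α) (hX : ⊥ ∉ X) :
    NIndependent n X ↔
      ∀ R : Finset α, ↑R ⊆ X → ∀ ε : α → Bool,
        R.inf (fun x => if ε x then x else xᶜ) = ⊥ →
        ∃ R' ⊆ R, (∀ x ∈ R', ε x = true) ∧ R'.card ≤ n ∧ R'.inf id = ⊥ := by
  classical
  constructor
  · rintro ⟨-, h1, h2, h3⟩ R hR ε hprod
    set f : α → α := fun x => if ε x then x else xᶜ with hf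
    set F := R.filter (fun x => ε x = true) with hFdef
    set G := R.filter (fun x => ¬ (ε x = true)) with hGdef
    have hFX : (F : Set α) ⊆ X := fun x hx => hR (Finset.filter_subset _ _ hx)
    have hGX : (G : Set α) ⊆ X := fun x hx => hR (Finset.filter_subset _ _ hx)
    have hsplit : F.inf f ⊓ G.inf f = ⊥ := by
      rw [← Finset.inf_union, Finset.filter_union_filter_not_eq]
      exact hprod
    have hFf : F.inf f = F.inf id := by
      apply Finset.inf_congr rfl
      intro x hx
      have := (Finset.mem_filter.mp hx).2
      simp [hf, this]
    have hGf : G.inf f = (G.sup id)ᶜ := by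
      rw [← finset_inf_compl_eq]
      apply Finset.inf_congr rfl
      intro x hx
      have := (Finset.mem_filter.mp hx).2
      simp [hf, this]
    have key : F.inf id ⊓ (G.sup id)ᶜ = ⊥ := by rw [← hFf, ← hGf]; exact hsplit
    by_cases hFne : F.Nonempty
    · by_cases hFinf : F.inf id = ⊥
      · obtain ⟨F', hF'F, hcard, hinf⟩ := h2 F hFX hFne hFinf
        refine ⟨F', hF'F.trans (Finset.filter_subset _ _), ?_, hcard, hinf⟩
        intro x hx
        exact (Finset.mem_filter.mp (hF'F hx)).2
      · have hle : F.inf id ≤ G.sup id := by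
          rwa [← sdiff_eq, sdiff_eq_bot_iff] at key
        by_cases hGne : G.Nonempty
        · obtain ⟨x, hxF, hxG⟩ := h3 F G hFX hGX hFne hGne hFinf hle
          exact absurd (Finset.mem_filter.mp hxF).2 (Finset.mem_filter.mp hxG).2
        · exfalso
          rw [Finset.not_nonempty_iff_eq_empty] at hGne
          apply hFinf
          rw [hGne] at hle
          simpa using le_bot_iff.mp (by simpa using hle)
    · exfalso
      rw [Finset.not_nonempty_iff_eq_empty] at hFne
      rw [hFne] at key
      simp only [Finset.inf_empty, top_inf_eq, compl_eq_bot] at key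
      by_cases hGne : G.Nonempty
      · exact h1 G hGX hGne key
      · rw [Finset.not_nonempty_iff_eq_empty] at hGne
        rw [hGne] at key
        simp at key
  · intro h
    refine ⟨hX, ?_, ?_, ?_⟩
    · intro F hF hFne htop
      obtain ⟨R', hsub, hall, -, hinf⟩ := h F hF (fun _ => false) (by
        simp [finset_inf_compl_eq, htop])
      have hR' : R' = ∅ := Finset.eq_empty_of_forall_notMem fun x hx => by
        simpa using hall x hx
      rw [hR'] at hinf
      simp at hinf
    · intro F hF hFne hinf
      obtain ⟨R', hsub, -, hcard, hinf'⟩ := h F hF (fun _ => true) (by simpa using (show F.inf (fun x => x) = ⊥ from hinf))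
      exact ⟨R', hsub, hcard, hinf'⟩
    · intro F G hF hG hFne hGne hFinf hle
      by_contra hemp
      have hdis : ∀ x, x ∈ F → x ∉ G := by
        intro x hxF hxG
        exact hemp ⟨x, hxF, hxG⟩
      set ε : α → Bool := fun x => decide (x ∈ F) with hε
      have hprod : (F ∪ G).inf (fun x => if ε x then x else xᶜ) = ⊥ := by
        rw [Finset.inf_union]
        have hFf : F.inf (fun x => if ε x then x else xᶜ) = F.inf id := by
          apply Finset.inf_congr rfl
          intro x hx
          simp [hε, hx]
        have hGf : G.inf (fun x => if ε x then x else xᶜ) = (G.sup id)ᶜ := by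
          rw [← finset_inf_compl_eq]
          apply Finset.inf_congr rfl
          intro x hx
          have : x ∉ F := fun hxF => hdis x hxF hx
          simp [hε, this]
        rw [hFf, hGf]
        have : F.inf id ⊓ (G.sup id)ᶜ ≤ G.sup id ⊓ (G.sup id)ᶜ :=
          inf_le_inf_right _ hle
        rw [inf_compl_eq_bot] at this
        exact le_bot_iff.mp this
      obtain ⟨R', hsub, hall, -, hinf'⟩ :=
        h (F ∪ G) (by intro x hx; rcases Finset.mem_union.mp hx with h' | h'
                      exacts [hF h', hG h']) ε hprod
      have hR'F : R' ⊆ F := by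
        intro x hx
        have := hall x hx
        simpa [hε] using this
      exact hFinf (le_bot_iff.mp (hinf' ▸ Finset.inf_mono hR'F))
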